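/- Let F ⊆ [λ]^ω and c : F → λ injective. Define F' = {X ∈ F : c(X*) ∈ X for every X* ∈ F with X* ⊊ X}. Suppose M ≺ H(θ) is countable with F, F', c ∈ M and M ∩ λ ∈ F'. Then for every α ∈ M ∩ ω₁, there exists X ∈ M ∩ F that is a proper subset of M ∩ λ of any rank α < M ∩ ω₁ realized in F; in particular, if for every countable ordinal α there is a member of F of rank α (in the well-founded order ⊊ on F, assumed well-founded), then for every α ∈ M ∩ ω₁ there is X ∈ M ∩ F with rank(X) = α, and hence rank(M ∩ λ) ≥ M ∩ ω₁. -/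

import Mathlib

open FirstOrder

/-- The first-order language of set theory: a single binary relation symbol. -/
def setLang : FirstOrder.Language :=
  ⟨fun _ => Empty, fun n => match n with | 2 => Unit | _ => Empty⟩

/-- The universe of ZF sets as a `setLang`-structure, interpreting the binary relation
symbol by genuine membership `∈`. -/
instance : setLang.Structure ZFSet where
  funMap {n} f _ := Empty.elim f
  RelMap {n} :=
    match n with
    | 0 => fun r _ => Empty.elim r
    | 1 => fun r _ => Empty.elim r
    | 2 => fun _ x => x 0 ∈ x 1
    | _ + 3 => fun r _ => Empty.elim r

/-- `x` is a (von Neumann) ordinal: a transitive set of transitive sets. -/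
def ZFIsOrd (x : ZFSet) : Prop := x.IsTransitive ∧ ∀ y ∈ x, ZFSet.IsTransitive y

namespace St19
open FirstOrder.Language

/-! ### basic ZFSet lemmas -/

lemma nmem_self : ∀ x : ZFSet, x ∉ x := by
  intro x
  induction x using ZFSet.mem_wf.induction with
  | _ x ih => exact fun h => ih x h h

lemma ord_mem_ord {a x : ZFSet} (ha : ZFIsOrd a) (hx : x ∈ a) : ZFIsOrd x :=
  ⟨ha.2 x hx, fun y hy => ha.2 y (ha.1 x hx hy)⟩

lemma ord_tricho : ∀ a b : ZFSet, ZFIsOrd a → ZFIsOrd b → a ∈ b ∨ a = b ∨ b ∈ a := by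
  intro a
  induction a using ZFSet.mem_wf.induction with
  | _ a iha =>
    intro b
    induction b using ZFSet.mem_wf.induction with
    | _ b ihb =>
      intro hao hbo
      by_contra hcon
      push_neg at hcon
      obtain ⟨h1, h2, h3⟩ := hcon
      have hab : a ⊆ b := by
        intro x hx
        rcases iha x hx b (ord_mem_ord hao hx) hbo with h | h | h
        · exact h
        · exact absurd (h ▸ hx) h3
        · exact absurd (hao.1 x hx h) h3
      have hba : b ⊆ a := by
        intro x hx
        rcases ihb x hx hao (ord_mem_ord hbo hx) with h | h | h
        · exact absurd (hbo.1 x hx h) h1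
        · exact absurd (h ▸ hx) h1
        · exact h
      exact h2 (ZFSet.ext fun z => ⟨fun hz => hab hz, fun hz => hba hz⟩)

lemma ord_succ {a : ZFSet} (h : ZFIsOrd a) : ZFIsOrd (insert a a) := by
  constructor
  · intro y hy z hz
    rcases ZFSet.mem_insert_iff.mp hy with rfl | hy'
    · exact ZFSet.mem_insert_iff.mpr (Or.inr hz)
    · exact ZFSet.mem_insert_iff.mpr (Or.inr (h.1 y hy' hz))
  · intro y hy
    rcases ZFSet.mem_insert_iff.mp hy with rfl | hy'
    · exact h.1
    · exact (ord_mem_ord h hy').1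

/-! ### formula building blocks -/

@[simp] lemma relMap_setLang (x : Fin 2 → ZFSet) :
    Structure.RelMap (L := setLang) (M := ZFSet) (n := 2) () x ↔ x 0 ∈ x 1 := Iff.rfl

abbrev mem2 {α : Type} {n} (t u : setLang.Term (α ⊕ Fin n)) : setLang.BoundedFormula α n :=
  Relations.boundedFormula₂ (() : setLang.Relations 2) t u

@[simp] lemma realize_mem2 {α : Type} {n} (t u : setLang.Term (α ⊕ Fin n))
    (v : α → ZFSet) (xs : Fin n → ZFSet) :
    (mem2 t u).Realize v xs ↔ t.realize (Sum.elim v xs) ∈ u.realize (Sum.elim v xs) := by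
  exact BoundedFormula.realize_rel₂.trans Iff.rfl

abbrev lk1 {α : Type} {n : ℕ} (x : α ⊕ Fin n) : α ⊕ Fin (n + 1) :=
  Sum.map id Fin.castSucc x

@[simp] lemma elim_snoc_lk1 {α : Type} {n : ℕ} (v : α → ZFSet) (xs : Fin n → ZFSet)
    (aa : ZFSet) (x : α ⊕ Fin n) :
    Sum.elim v (Fin.snoc xs aa : Fin (n+1) → ZFSet) (lk1 x) = Sum.elim v xs x := by
  cases x <;> simp

@[simp] lemma elim_snoc_last {α : Type} {n : ℕ} (v : α → ZFSet) (xs : Fin n → ZFSet)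
    (aa : ZFSet) :
    Sum.elim v (Fin.snoc xs aa : Fin (n+1) → ZFSet) (Sum.inr (Fin.last n)) = aa := by
  simp

/-- formula with meaning: pair(a,b) ∈ c -/
def pairMemF {α : Type} {n : ℕ} (a b c : α ⊕ Fin n) : setLang.BoundedFormula α n :=
  let p1 : α ⊕ Fin (n+1) := Sum.inr (Fin.last n)
  let p2 := lk1 p1
  let a3 := lk1 (lk1 (lk1 a))
  let b3 := lk1 (lk1 (lk1 b))
  let c1 := lk1 c
  let w2 : α ⊕ Fin (n+1+1) := Sum.inr (Fin.last (n+1))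
  let w3 := lk1 w2
  let u3 : α ⊕ Fin (n+1+1+1) := Sum.inr (Fin.last (n+1+1))
  BoundedFormula.ex
    ((BoundedFormula.all
        ((mem2 (.var w2) (.var p2)).iff
          ((BoundedFormula.all ((mem2 (.var u3) (.var w3)).iff (Term.bdEqual (.var u3) (.var a3)))) ⊔
           (BoundedFormula.all ((mem2 (.var u3) (.var w3)).iff
              ((Term.bdEqual (.var u3) (.var a3)) ⊔ (Term.bdEqual (.var u3) (.var b3)))))))) ⊓
      (mem2 (.var p1) (.var c1)))

lemma pair_char (A B p : ZFSet) :
    (∀ w, w ∈ p ↔ (∀ u, u ∈ w ↔ u = A) ∨ (∀ u, u ∈ w ↔ (u = A ∨ u = B))) ↔ p = ZFSet.pair A B := by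
  have h1 : ∀ w : ZFSet, (∀ u, u ∈ w ↔ u = A) ↔ w = ({A} : ZFSet) := by
    intro w; rw [ZFSet.ext_iff]; simp
  have h2 : ∀ w : ZFSet, (∀ u, u ∈ w ↔ (u = A ∨ u = B)) ↔ w = ({A, B} : ZFSet) := by
    intro w; rw [ZFSet.ext_iff]; simp [ZFSet.mem_pair]
  have h3 : ∀ w : ZFSet, w ∈ ZFSet.pair A B ↔ (w = {A} ∨ w = {A, B}) := by
    intro w; rw [ZFSet.pair]; exact ZFSet.mem_pair
  rw [ZFSet.ext_iff]
  constructor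
  · intro h w; rw [h w, h3 w, h1 w, h2 w]
  · intro h w; rw [h w, h3 w, h1 w, h2 w]

@[simp] lemma realize_pairMemF {α : Type} {n : ℕ} (a b c : α ⊕ Fin n)
    (v : α → ZFSet) (xs : Fin n → ZFSet) :
    (pairMemF a b c).Realize v xs ↔
      ZFSet.pair (Sum.elim v xs a) (Sum.elim v xs b) ∈ Sum.elim v xs c := by
  simp only [pairMemF, BoundedFormula.realize_ex, BoundedFormula.realize_inf,
    BoundedFormula.realize_all, BoundedFormula.realize_iff, BoundedFormula.realize_sup,
    BoundedFormula.realize_bdEqual, realize_mem2, Term.realize_var,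
    elim_snoc_lk1, elim_snoc_last]
  constructor
  · rintro ⟨p, hp, hpc⟩
    rwa [(pair_char _ _ p).mp hp] at hpc
  · intro h
    exact ⟨ZFSet.pair (Sum.elim v xs a) (Sum.elim v xs b), (pair_char _ _ _).mpr rfl, h⟩

/-- formula with meaning: a = ∅ -/
def emptyF {α : Type} {n : ℕ} (a : α ⊕ Fin n) : setLang.BoundedFormula α n :=
  BoundedFormula.all (∼(mem2 (.var (Sum.inr (Fin.last n))) (.var (lk1 a))))

@[simp] lemma realize_emptyF {α : Type} {n : ℕ} (a : α ⊕ Fin n)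
    (v : α → ZFSet) (xs : Fin n → ZFSet) :
    (emptyF a).Realize v xs ↔ Sum.elim v xs a = ∅ := by
  simp only [emptyF, BoundedFormula.realize_all, BoundedFormula.realize_not, realize_mem2,
    Term.realize_var, elim_snoc_lk1, elim_snoc_last]
  constructor
  · intro h; exact ZFSet.ext fun z => ⟨fun hz => absurd hz (h z), fun hz => absurd hz (ZFSet.notMem_empty z)⟩
  · intro h z; rw [h]; exact ZFSet.notMem_empty z

/-- formula with meaning: a = insert b b -/
def succEqF {α : Type} {n : ℕ} (a b : α ⊕ Fin n) : setLang.BoundedFormula α n :=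
  BoundedFormula.all
    ((mem2 (.var (Sum.inr (Fin.last n))) (.var (lk1 a))).iff
      ((mem2 (.var (Sum.inr (Fin.last n))) (.var (lk1 b))) ⊔
        (Term.bdEqual (.var (Sum.inr (Fin.last n))) (.var (lk1 b)))))

@[simp] lemma realize_succEqF {α : Type} {n : ℕ} (a b : α ⊕ Fin n)
    (v : α → ZFSet) (xs : Fin n → ZFSet) :
    (succEqF a b).Realize v xs ↔ Sum.elim v xs a = insert (Sum.elim v xs b) (Sum.elim v xs b) := by
  simp only [succEqF, BoundedFormula.realize_all, BoundedFormula.realize_iff,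
    BoundedFormula.realize_sup, BoundedFormula.realize_bdEqual, realize_mem2,
    Term.realize_var, elim_snoc_lk1, elim_snoc_last]
  rw [ZFSet.ext_iff]
  constructor
  · intro h z; rw [h z, ZFSet.mem_insert_iff]; tauto
  · intro h z; rw [h z, ZFSet.mem_insert_iff]; tauto

/-- formula with meaning: a ⊆ b -/
def subF {α : Type} {n : ℕ} (a b : α ⊕ Fin n) : setLang.BoundedFormula α n :=
  BoundedFormula.all
    ((mem2 (.var (Sum.inr (Fin.last n))) (.var (lk1 a))).imp
      (mem2 (.var (Sum.inr (Fin.last n))) (.var (lk1 b))))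

@[simp] lemma realize_subF {α : Type} {n : ℕ} (a b : α ⊕ Fin n)
    (v : α → ZFSet) (xs : Fin n → ZFSet) :
    (subF a b).Realize v xs ↔ (Sum.elim v xs a).toSet ⊆ (Sum.elim v xs b).toSet := by
  simp only [subF, BoundedFormula.realize_all, BoundedFormula.realize_imp, realize_mem2,
    Term.realize_var, elim_snoc_lk1, elim_snoc_last]
  constructor
  · intro h z hz; exact Iff.rfl.mpr (h z (Iff.rfl.mp hz))
  · intro h z hz; exact Iff.rfl.mp (h (Iff.rfl.mpr hz))

/-- formula with meaning: a ⊊ b -/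
def ssubF {α : Type} {n : ℕ} (a b : α ⊕ Fin n) : setLang.BoundedFormula α n :=
  (subF a b) ⊓ (∼(subF b a))

@[simp] lemma realize_ssubF {α : Type} {n : ℕ} (a b : α ⊕ Fin n)
    (v : α → ZFSet) (xs : Fin n → ZFSet) :
    (ssubF a b).Realize v xs ↔ (Sum.elim v xs a).toSet ⊂ (Sum.elim v xs b).toSet := by
  simp only [ssubF, BoundedFormula.realize_inf, BoundedFormula.realize_not, realize_subF]
  rw [Set.ssubset_def]


/-! ### elementary substructure witness transfer -/

lemma snoc0 {β : Type*} (xs : Fin 0 → β) (a : β) :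
    (Fin.snoc xs a : Fin 1 → β) = fun _ => a := by
  funext i
  have : i = Fin.last 0 := Fin.ext (by omega)
  rw [this, Fin.snoc_last]

lemma witness1 (S : setLang.ElementarySubstructure ZFSet) {k : ℕ}
    (φ : setLang.BoundedFormula (Fin k) 1) (v : Fin k → ZFSet) (hv : ∀ i, v i ∈ S)
    (h : ∃ a : ZFSet, φ.Realize v (fun _ => a)) :
    ∃ a : ZFSet, a ∈ S ∧ φ.Realize v (fun _ => a) := by
  set v' : Fin k → S := fun i => ⟨v i, hv i⟩ with hv'
  have hcv : (S.subtype : S → ZFSet) ∘ v' = v := rfl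
  have hex : (φ.ex).Realize ((S.subtype : S → ZFSet) ∘ v')
      ((S.subtype : S → ZFSet) ∘ (default : Fin 0 → S)) := by
    rw [hcv, BoundedFormula.realize_ex]
    obtain ⟨a, ha⟩ := h
    exact ⟨a, by rw [snoc0]; exact ha⟩
  rw [S.subtype.map_boundedFormula, BoundedFormula.realize_ex] at hex
  obtain ⟨a', ha'⟩ := hex
  have h2 := (S.subtype.map_boundedFormula φ v'
    (Fin.snoc (default : Fin 0 → S) a')).mpr ha'
  rw [hcv, Fin.comp_snoc, snoc0] at h2
  exact ⟨(a' : ZFSet), a'.2, h2⟩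

lemma witness2 (S : setLang.ElementarySubstructure ZFSet) {k : ℕ}
    (φ : setLang.BoundedFormula (Fin k) 2) (v : Fin k → ZFSet) (hv : ∀ i, v i ∈ S)
    (h : ∃ a b : ZFSet, φ.Realize v (Fin.snoc (Fin.snoc default a) b)) :
    ∃ a b : ZFSet, a ∈ S ∧ b ∈ S ∧ φ.Realize v (Fin.snoc (Fin.snoc default a) b) := by
  set v' : Fin k → S := fun i => ⟨v i, hv i⟩ with hv'
  have hcv : (S.subtype : S → ZFSet) ∘ v' = v := rfl
  have cd0 : (S.subtype : S → ZFSet) ∘ (default : Fin 0 → S) = (default : Fin 0 → ZFSet) :=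
    funext fun i => i.elim0
  have hex : (φ.ex.ex).Realize ((S.subtype : S → ZFSet) ∘ v')
      ((S.subtype : S → ZFSet) ∘ (default : Fin 0 → S)) := by
    rw [hcv, cd0, BoundedFormula.realize_ex]
    obtain ⟨a, b, hab⟩ := h
    exact ⟨a, BoundedFormula.realize_ex.mpr ⟨b, hab⟩⟩
  rw [S.subtype.map_boundedFormula, BoundedFormula.realize_ex] at hex
  obtain ⟨a', hex⟩ := hex
  rw [BoundedFormula.realize_ex] at hex
  obtain ⟨b', hab⟩ := hex
  have h2 := (S.subtype.map_boundedFormula φ v'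
    (Fin.snoc (Fin.snoc (default : Fin 0 → S) a') b')).mpr hab
  rw [hcv, Fin.comp_snoc, Fin.comp_snoc, cd0] at h2
  exact ⟨(a' : ZFSet), (b' : ZFSet), a'.2, b'.2, h2⟩

/-! ### the concrete formulas -/

def φempty : setLang.BoundedFormula (Fin 0) 1 := emptyF (Sum.inr (Fin.last 0))

lemma realize_φempty (v : Fin 0 → ZFSet) (a : ZFSet) :
    φempty.Realize v (fun _ => a) ↔ a = ∅ := by
  simp [φempty]

def φsucc : setLang.BoundedFormula (Fin 1) 1 := succEqF (Sum.inr (Fin.last 0)) (Sum.inl 0)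

lemma realize_φsucc (v : Fin 1 → ZFSet) (a : ZFSet) :
    φsucc.Realize v (fun _ => a) ↔ a = insert (v 0) (v 0) := by
  simp [φsucc]

def φcval : setLang.BoundedFormula (Fin 2) 1 :=
  pairMemF (Sum.inr (Fin.last 0)) (Sum.inl 0) (Sum.inl 1)

lemma realize_φcval (v : Fin 2 → ZFSet) (a : ZFSet) :
    φcval.Realize v (fun _ => a) ↔ ZFSet.pair a (v 0) ∈ v 1 := by
  simp [φcval]

def φfval : setLang.BoundedFormula (Fin 2) 1 :=
  pairMemF (Sum.inl 0) (Sum.inr (Fin.last 0)) (Sum.inl 1)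

lemma realize_φfval (v : Fin 2 → ZFSet) (a : ZFSet) :
    φfval.Realize v (fun _ => a) ↔ ZFSet.pair (v 0) a ∈ v 1 := by
  simp [φfval]

def φXrk : setLang.BoundedFormula (Fin 3) 1 :=
  (mem2 (.var (Sum.inr (Fin.last 0))) (.var (Sum.inl 0))) ⊓
    pairMemF (Sum.inr (Fin.last 0)) (Sum.inl 2) (Sum.inl 1)

lemma realize_φXrk (v : Fin 3 → ZFSet) (a : ZFSet) :
    φXrk.Realize v (fun _ => a) ↔ a ∈ v 0 ∧ ZFSet.pair a (v 2) ∈ v 1 := by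
  simp [φXrk]


/-- Property: `R` is (the graph of) the rank function on `F`. -/
def IsRkFun (F R : ZFSet) : Prop :=
  (∀ X, X ∈ F → ∃ ρ, ZFSet.pair X ρ ∈ R) ∧
  (∀ X ρ ρ', ZFSet.pair X ρ ∈ R → ZFSet.pair X ρ' ∈ R → ρ = ρ') ∧
  (∀ X ρ, X ∈ F → ZFSet.pair X ρ ∈ R →
    ∀ b, b ∈ ρ ↔ ∃ Y, (Y ∈ F ∧ Y.toSet ⊂ X.toSet) ∧
      ∃ σ, ZFSet.pair Y σ ∈ R ∧ (b ∈ σ ∨ b = σ))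

def φrkfun : setLang.BoundedFormula (Fin 1) 1 :=
  (BoundedFormula.all ((mem2 (.var (Sum.inr (Fin.last 1))) (.var (Sum.inl 0))).imp
     (BoundedFormula.ex (pairMemF (lk1 (Sum.inr (Fin.last 1))) (Sum.inr (Fin.last 2))
        (lk1 (lk1 (Sum.inr (Fin.last 0)))))))) ⊓
  ((BoundedFormula.all (BoundedFormula.all (BoundedFormula.all
     ((pairMemF (lk1 (lk1 (Sum.inr (Fin.last 1)))) (lk1 (Sum.inr (Fin.last 2)))
        (lk1 (lk1 (lk1 (Sum.inr (Fin.last 0)))))).imp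
      ((pairMemF (lk1 (lk1 (Sum.inr (Fin.last 1)))) (Sum.inr (Fin.last 3))
        (lk1 (lk1 (lk1 (Sum.inr (Fin.last 0)))))).imp
       (Term.bdEqual (.var (lk1 (Sum.inr (Fin.last 2)))) (.var (Sum.inr (Fin.last 3))))))))) ⊓
  (BoundedFormula.all (BoundedFormula.all
    ((mem2 (.var (lk1 (Sum.inr (Fin.last 1)))) (.var (Sum.inl 0))).imp
     ((pairMemF (lk1 (Sum.inr (Fin.last 1))) (Sum.inr (Fin.last 2))
        (lk1 (lk1 (Sum.inr (Fin.last 0))))).imp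
      (BoundedFormula.all
        ((mem2 (.var (Sum.inr (Fin.last 3))) (.var (lk1 (Sum.inr (Fin.last 2))))).iff
         (BoundedFormula.ex
           (((mem2 (.var (Sum.inr (Fin.last 4))) (.var (Sum.inl 0))) ⊓
             (ssubF (Sum.inr (Fin.last 4)) (lk1 (lk1 (lk1 (Sum.inr (Fin.last 1))))))) ⊓
            (BoundedFormula.ex
              ((pairMemF (lk1 (Sum.inr (Fin.last 4))) (Sum.inr (Fin.last 5))
                 (lk1 (lk1 (lk1 (lk1 (lk1 (Sum.inr (Fin.last 0)))))))) ⊓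
               ((mem2 (.var (lk1 (lk1 (Sum.inr (Fin.last 3))))) (.var (Sum.inr (Fin.last 5)))) ⊔
                (Term.bdEqual (.var (lk1 (lk1 (Sum.inr (Fin.last 3)))))
                  (.var (Sum.inr (Fin.last 5))))))))))))))))

lemma realize_φrkfun (v : Fin 1 → ZFSet) (R : ZFSet) :
    φrkfun.Realize v (fun _ => R) ↔ IsRkFun (v 0) R := by
  simp only [φrkfun, IsRkFun, BoundedFormula.realize_inf, BoundedFormula.realize_all,
    BoundedFormula.realize_ex, BoundedFormula.realize_imp, BoundedFormula.realize_iff,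
    BoundedFormula.realize_sup, BoundedFormula.realize_bdEqual, realize_mem2, realize_pairMemF,
    realize_ssubF, Term.realize_var, elim_snoc_lk1, elim_snoc_last, Sum.elim_inl, Sum.elim_inr,
    Sum.map_inl, Sum.map_inr, Fin.snoc_last, Fin.snoc_castSucc, id_eq]


/-- Property: every element of `w` is ∅ or a successor of a member of `w`, and `f` maps
members of `w` onto (⊇) the elements of `X`, functionally. -/
def IsEnum (X w f : ZFSet) : Prop :=
  (∀ u, u ∈ w → (u = ∅ ∨ ∃ m, (m ∈ w ∧ m ∈ u) ∧ u = insert m m)) ∧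
  (∀ x, x ∈ X → ∃ n, n ∈ w ∧ ZFSet.pair n x ∈ f) ∧
  (∀ n y y', ZFSet.pair n y ∈ f → ZFSet.pair n y' ∈ f → y = y')

def φenum : setLang.BoundedFormula (Fin 1) 2 :=
  (BoundedFormula.all
    ((mem2 (.var (Sum.inr (Fin.last 2))) (.var (lk1 (lk1 (Sum.inr (Fin.last 0)))))).imp
      ((emptyF (Sum.inr (Fin.last 2))) ⊔
        (BoundedFormula.ex
          (((mem2 (.var (Sum.inr (Fin.last 3))) (.var (lk1 (lk1 (lk1 (Sum.inr (Fin.last 0))))))) ⊓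
            (mem2 (.var (Sum.inr (Fin.last 3))) (.var (lk1 (Sum.inr (Fin.last 2)))))) ⊓
            (succEqF (lk1 (Sum.inr (Fin.last 2))) (Sum.inr (Fin.last 3)))))))) ⊓
  ((BoundedFormula.all
    ((mem2 (.var (Sum.inr (Fin.last 2))) (.var (Sum.inl 0))).imp
      (BoundedFormula.ex
        ((mem2 (.var (Sum.inr (Fin.last 3))) (.var (lk1 (lk1 (lk1 (Sum.inr (Fin.last 0))))))) ⊓
          (pairMemF (Sum.inr (Fin.last 3)) (lk1 (Sum.inr (Fin.last 2)))
            (lk1 (lk1 (Sum.inr (Fin.last 1))))))))) ⊓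
  (BoundedFormula.all (BoundedFormula.all (BoundedFormula.all
    ((pairMemF (lk1 (lk1 (Sum.inr (Fin.last 2)))) (lk1 (Sum.inr (Fin.last 3)))
       (lk1 (lk1 (lk1 (Sum.inr (Fin.last 1)))))).imp
     ((pairMemF (lk1 (lk1 (Sum.inr (Fin.last 2)))) (Sum.inr (Fin.last 4))
       (lk1 (lk1 (lk1 (Sum.inr (Fin.last 1)))))).imp
      (Term.bdEqual (.var (lk1 (Sum.inr (Fin.last 3)))) (.var (Sum.inr (Fin.last 4))))))))))

lemma realize_φenum (v : Fin 1 → ZFSet) (w f : ZFSet) :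
    φenum.Realize v (Fin.snoc (Fin.snoc default w) f) ↔ IsEnum (v 0) w f := by
  simp only [φenum, IsEnum, BoundedFormula.realize_inf, BoundedFormula.realize_all,
    BoundedFormula.realize_ex, BoundedFormula.realize_imp, BoundedFormula.realize_iff,
    BoundedFormula.realize_sup, BoundedFormula.realize_bdEqual, realize_mem2, realize_pairMemF,
    realize_emptyF, realize_succEqF, Term.realize_var, elim_snoc_lk1, elim_snoc_last,
    Sum.elim_inl, Sum.elim_inr, Sum.map_inl, Sum.map_inr, Fin.snoc_last, Fin.snoc_castSucc, id_eq]


/-! ### ZF-side constructions -/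

lemma succ_mem_om1 {om1 a : ZFSet}
    (hom1 : ZFIsOrd om1 ∧ ¬ om1.toSet.Countable ∧ ∀ y ∈ om1, y.toSet.Countable)
    (ha : a ∈ om1) : insert a a ∈ om1 := by
  have hao := ord_mem_ord hom1.1 ha
  have hso := ord_succ hao
  rcases ord_tricho (insert a a) om1 hso hom1.1 with h | h | h
  · exact h
  · exfalso
    apply hom1.2.1
    have hts : (insert a a : ZFSet).toSet = insert (a : ZFSet) a.toSet := Set.ext fun z => by
      show z ∈ insert a a ↔ z = a ∨ z ∈ a; rw [ZFSet.mem_insert_iff]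
    rw [← h, hts]
    exact (hom1.2.2 a ha).insert a
  · exfalso
    rcases ZFSet.mem_insert_iff.mp h with h' | h'
    · exact hom1.2.1 (h' ▸ hom1.2.2 a ha)
    · exact nmem_self om1 (hom1.1.1 a ha h')

def natSet : ℕ → ZFSet := fun n => Nat.rec ∅ (fun _ s => insert s s) n

lemma natSet_lt : ∀ {m n : ℕ}, m < n → natSet m ∈ natSet n := by
  intro m n
  induction n with
  | zero => omega
  | succ k ih =>
    intro h
    rcases Nat.lt_succ_iff_lt_or_eq.mp h with h' | rfl
    · exact ZFSet.mem_insert_iff.mpr (Or.inr (ih h'))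
    · exact ZFSet.mem_insert_iff.mpr (Or.inl rfl)

lemma natSet_inj : Function.Injective natSet := by
  intro m n h
  rcases lt_trichotomy m n with h' | h' | h'
  · exact absurd (h ▸ natSet_lt h') (nmem_self _)
  · exact h'
  · exact absurd (h ▸ natSet_lt h') (nmem_self _)

lemma enum_exists {X : ZFSet} (hc : X.toSet.Countable) (hne : X.toSet.Nonempty) :
    ∃ w f : ZFSet, IsEnum X w f := by
  obtain ⟨e, he⟩ := hc.exists_eq_range hne
  refine ⟨ZFSet.range (fun n : ℕ => natSet n),
    ZFSet.range (fun n : ℕ => ZFSet.pair (natSet n) (e n)), ?_, ?_, ?_⟩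
  · intro u hu
    obtain ⟨n, rfl⟩ := ZFSet.mem_range.mp hu
    match n with
    | 0 => exact Or.inl rfl
    | Nat.succ m =>
      exact Or.inr ⟨natSet m, ⟨ZFSet.mem_range.mpr ⟨m, rfl⟩,
        ZFSet.mem_insert_iff.mpr (Or.inl rfl)⟩, rfl⟩
  · intro x hx
    have : x ∈ X.toSet := Iff.rfl.mpr hx
    rw [he] at this
    obtain ⟨n, rfl⟩ := this
    exact ⟨natSet n, ZFSet.mem_range.mpr ⟨n, rfl⟩, ZFSet.mem_range.mpr ⟨n, rfl⟩⟩
  · intro n y y' h1 h2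
    obtain ⟨k, hk⟩ := ZFSet.mem_range.mp h1
    obtain ⟨k', hk'⟩ := ZFSet.mem_range.mp h2
    obtain ⟨hk1, hk2⟩ := ZFSet.pair_injective hk
    obtain ⟨hk1', hk2'⟩ := ZFSet.pair_injective hk'
    have : k = k' := natSet_inj (hk1.trans hk1'.symm)
    rw [← hk2, ← hk2', this]

lemma rkGraph_exists (F : ZFSet) (rk : ZFSet → ZFSet)
    (hrkc : ∀ X ∈ F, ∀ b : ZFSet, b ∈ rk X ↔
      ∃ Y ∈ F, Y.toSet ⊂ X.toSet ∧ (b ∈ rk Y ∨ b = rk Y)) :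
    ∃ R : ZFSet, IsRkFun F R ∧ ∀ X ∈ F, ZFSet.pair X (rk X) ∈ R := by
  classical
  letI : ZFSet.Definable₁ (fun X => ZFSet.pair X (rk X)) := Classical.allZFSetDefinable _
  set R := ZFSet.image (fun X => ZFSet.pair X (rk X)) F with hRdef
  have hmem : ∀ X ρ : ZFSet, ZFSet.pair X ρ ∈ R ↔ X ∈ F ∧ ρ = rk X := by
    intro X ρ
    constructor
    · intro h
      obtain ⟨Z, hZF, hZ⟩ := ZFSet.mem_image.mp h
      obtain ⟨h1, h2⟩ := ZFSet.pair_injective hZ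
      exact ⟨h1 ▸ hZF, h1 ▸ h2.symm⟩
    · rintro ⟨hXF, rfl⟩
      exact ZFSet.mem_image.mpr ⟨X, hXF, rfl⟩
  refine ⟨R, ⟨?_, ?_, ?_⟩, fun X hX => (hmem X (rk X)).mpr ⟨hX, rfl⟩⟩
  · intro X hX
    exact ⟨rk X, (hmem X (rk X)).mpr ⟨hX, rfl⟩⟩
  · intro X ρ ρ' h h'
    rw [((hmem X ρ).mp h).2, ((hmem X ρ').mp h').2]
  · intro X ρ hX hρ
    obtain ⟨-, rfl⟩ := (hmem X ρ).mp hρ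
    intro b
    rw [hrkc X hX b]
    constructor
    · rintro ⟨Y, hYF, hYs, hb⟩
      exact ⟨Y, ⟨hYF, hYs⟩, rk Y, (hmem Y (rk Y)).mpr ⟨hYF, rfl⟩, hb⟩
    · rintro ⟨Y, ⟨hYF, hYs⟩, σ, hσ, hb⟩
      obtain ⟨-, rfl⟩ := (hmem Y σ).mp hσ
      exact ⟨Y, hYF, hYs, hb⟩

lemma rank_unique {F R : ZFSet} {rk : ZFSet → ZFSet}
    (hwf : WellFounded (fun A B : {x : ZFSet // x ∈ F} => A.1.toSet ⊂ B.1.toSet))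
    (hrkc : ∀ X ∈ F, ∀ b : ZFSet, b ∈ rk X ↔
      ∃ Y ∈ F, Y.toSet ⊂ X.toSet ∧ (b ∈ rk Y ∨ b = rk Y))
    (hR : IsRkFun F R) :
    ∀ X, X ∈ F → ∀ ρ, ZFSet.pair X ρ ∈ R → ρ = rk X := by
  suffices h : ∀ p : {x : ZFSet // x ∈ F}, ∀ ρ, ZFSet.pair p.1 ρ ∈ R → ρ = rk p.1 from
    fun X hX => h ⟨X, hX⟩
  intro p
  induction p using hwf.induction with
  | _ p ih =>
    intro ρ hρ
    apply ZFSet.ext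
    intro b
    rw [hrkc p.1 p.2 b, hR.2.2 p.1 ρ p.2 hρ b]
    constructor
    · rintro ⟨Y, ⟨hYF, hYs⟩, σ, hσ, hbσ⟩
      have hrkY := ih ⟨Y, hYF⟩ hYs σ hσ
      exact ⟨Y, hYF, hYs, hrkY ▸ hbσ⟩
    · rintro ⟨Y, hYF, hYs, hbσ⟩
      obtain ⟨σ, hσ⟩ := hR.1 Y hYF
      have hrkY := ih ⟨Y, hYF⟩ hYs σ hσ
      exact ⟨Y, ⟨hYF, hYs⟩, σ, hσ, hrkY ▸ hbσ⟩

lemma descent {F : ZFSet} {rk : ZFSet → ZFSet}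
    (hwf : WellFounded (fun A B : {x : ZFSet // x ∈ F} => A.1.toSet ⊂ B.1.toSet))
    (hrkc : ∀ X ∈ F, ∀ b : ZFSet, b ∈ rk X ↔
      ∃ Y ∈ F, Y.toSet ⊂ X.toSet ∧ (b ∈ rk Y ∨ b = rk Y)) :
    ∀ X, X ∈ F → ∀ a : ZFSet, a ∈ rk X →
      ∃ Y, Y ∈ F ∧ Y.toSet ⊂ X.toSet ∧ rk Y = a := by
  suffices h : ∀ p : {x : ZFSet // x ∈ F}, ∀ a : ZFSet, a ∈ rk p.1 →
      ∃ Y, Y ∈ F ∧ Y.toSet ⊂ p.1.toSet ∧ rk Y = a from fun X hX => h ⟨X, hX⟩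
  intro p
  induction p using hwf.induction with
  | _ p ih =>
    intro a ha
    obtain ⟨Y, hYF, hYs, hcase⟩ := (hrkc p.1 p.2 a).mp ha
    rcases hcase with hmem | heq
    · obtain ⟨Z, hZF, hZs, hZ⟩ := ih ⟨Y, hYF⟩ hYs a hmem
      exact ⟨Z, hZF, hZs.trans hYs, hZ⟩
    · exact ⟨Y, hYF, hYs, heq.symm⟩

end St19

open St19

/-- Let `F ⊆ [λ]^ω` with `⊊` well-founded on `F`, with ZF-ordinal-valued rank function
`rk` (characterized by `rk X = sup{rk Y + 1 : Y ∈ F, Y ⊊ X}`), all ranks countable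
(i.e. below `ω₁`, the least uncountable ordinal), and every countable ordinal realized
as a rank.  Let `c : F → λ` be injective and
`F' = {X ∈ F : c(X*) ∈ X for every X* ∈ F with X* ⊊ X}`.  Suppose `M` is a countable
elementary submodel (of the ZF universe, playing the role of `H(θ)`) with
`F, F', c ∈ M` and `Xλ = M ∩ λ ∈ F'`.  Then for every `α ∈ M ∩ ω₁` there is
`X ∈ M ∩ F` with `X ⊊ M ∩ λ` and `rk X = α`; hence `rank(M ∩ λ) ≥ M ∩ ω₁`, i.e.
`M ∩ ω₁ ⊆ rk Xλ`. -/
theorem stmt19 (lam om1 : ZFSet) (hlam : ZFIsOrd lam)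
    (hom1 : ZFIsOrd om1 ∧ ¬ om1.toSet.Countable ∧ ∀ y ∈ om1, y.toSet.Countable)
    (hom1lam : om1.toSet ⊆ lam.toSet)
    (F : ZFSet)
    (hF : ∀ X ∈ F, X.toSet ⊆ lam.toSet ∧ X.toSet.Countable ∧ X.toSet.Infinite)
    (hwf : WellFounded (fun A B : {x : ZFSet // x ∈ F} => A.1.toSet ⊂ B.1.toSet))
    (rk : ZFSet → ZFSet)
    (hrk : ∀ X ∈ F, ZFIsOrd (rk X) ∧ rk X ∈ om1 ∧
      ∀ b : ZFSet, b ∈ rk X ↔ ∃ Y ∈ F, Y.toSet ⊂ X.toSet ∧ (b ∈ rk Y ∨ b = rk Y))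
    (hreal : ∀ α ∈ om1, ∃ X ∈ F, rk X = α)
    (c : ZFSet) (hc : ZFSet.IsFunc F lam c)
    (hcinj : ∀ X X' y : ZFSet, ZFSet.pair X y ∈ c → ZFSet.pair X' y ∈ c → X = X')
    (F' : ZFSet)
    (hF' : ∀ X : ZFSet, X ∈ F' ↔ X ∈ F ∧
      ∀ Xs ∈ F, Xs.toSet ⊂ X.toSet → ∀ y, ZFSet.pair Xs y ∈ c → y ∈ X)
    (M : setLang.ElementarySubstructure ZFSet)
    (hMcnt : (M : Set ZFSet).Countable)
    (hFM : F ∈ M) (hF'M : F' ∈ M) (hcM : c ∈ M)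
    (Xlam : ZFSet) (hXlam : Xlam.toSet = {x | x ∈ M ∧ x ∈ lam}) (hXlamF' : Xlam ∈ F') :
    (∀ α : ZFSet, α ∈ M → α ∈ om1 →
      ∃ X : ZFSet, X ∈ F ∧ X ∈ M ∧ X.toSet ⊂ Xlam.toSet ∧ rk X = α) ∧
    (∀ α : ZFSet, α ∈ M → α ∈ om1 → α ∈ rk Xlam) := by
  classical
  have hrkc : ∀ X ∈ F, ∀ b : ZFSet, b ∈ rk X ↔
      ∃ Y ∈ F, Y.toSet ⊂ X.toSet ∧ (b ∈ rk Y ∨ b = rk Y) := fun X hX => (hrk X hX).2.2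
  have hXlamF : Xlam ∈ F := ((hF' Xlam).mp hXlamF').1
  have hmemM : ∀ x : ZFSet, x ∈ Xlam → x ∈ M := by
    intro x hx
    have hx' : x ∈ Xlam.toSet := Iff.rfl.mpr hx
    rw [hXlam] at hx'
    exact hx'.1
  -- ∅ ∈ M
  have hemptyM : (∅ : ZFSet) ∈ M := by
    obtain ⟨a, haM, ha⟩ := witness1 M φempty (fun i => i.elim0) (fun i => i.elim0)
      ⟨∅, (realize_φempty _ _).mpr rfl⟩
    rw [realize_φempty] at ha
    exact ha ▸ haM
  -- M is closed under successor
  have hsuccM : ∀ x : ZFSet, x ∈ M → insert x x ∈ M := by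
    intro x hx
    obtain ⟨a, haM, ha⟩ := witness1 M φsucc (fun _ => x) (fun _ => hx)
      ⟨insert x x, (realize_φsucc _ _).mpr rfl⟩
    rw [realize_φsucc] at ha
    exact ha ▸ haM
  -- the c-trick: every member of F properly below Xlam belongs to M
  have hctrick : ∀ X : ZFSet, X ∈ F → X.toSet ⊂ Xlam.toSet → X ∈ M := by
    intro X hXF hsub
    obtain ⟨y, hy, -⟩ := hc.2 X hXF
    have hyM : y ∈ M := hmemM y (((hF' Xlam).mp hXlamF').2 X hXF hsub y hy)
    obtain ⟨z, hzM, hz⟩ := witness1 M φcval ![y, c]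
      (by intro i; fin_cases i <;> assumption) ⟨X, (realize_φcval _ _).mpr hy⟩
    rw [realize_φcval] at hz
    exact (hcinj z X y hz hy) ▸ hzM
  -- a rank function for F inside M
  obtain ⟨R0, hR0, -⟩ := rkGraph_exists F rk hrkc
  obtain ⟨R', hR'M, hR'⟩ := witness1 M φrkfun (fun _ => F) (fun _ => hFM)
    ⟨R0, (realize_φrkfun _ _).mpr hR0⟩
  rw [realize_φrkfun] at hR'
  have hR'' : IsRkFun F R' := hR'
  have hval : ∀ X, X ∈ F → ∀ ρ, ZFSet.pair X ρ ∈ R' → ρ = rk X :=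
    rank_unique hwf hrkc hR''
  -- Step 1: members of F of any rank in M ∩ ω₁, inside M and below Xlam
  have step1 : ∀ a : ZFSet, a ∈ M → a ∈ om1 →
      ∃ X, X ∈ F ∧ X ∈ M ∧ X.toSet ⊆ Xlam.toSet ∧ rk X = a := by
    intro a haM haom
    obtain ⟨X0, hX0F, hX0⟩ := hreal a haom
    have hpair0 : ZFSet.pair X0 a ∈ R' := by
      obtain ⟨ρ, hρ⟩ := hR''.1 X0 hX0F
      have hρ' := hval X0 hX0F ρ hρ
      rwa [hρ', hX0] at hρ
    obtain ⟨X, hXM, hX⟩ := witness1 M φXrk ![F, R', a]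
      (by intro i; fin_cases i <;> assumption)
      ⟨X0, (realize_φXrk _ _).mpr ⟨hX0F, hpair0⟩⟩
    rw [realize_φXrk] at hX
    have hXF : X ∈ F := hX.1
    have hXpair : ZFSet.pair X a ∈ R' := hX.2
    have hrkX : rk X = a := (hval X hXF a hXpair).symm
    -- X is a subset of M
    have hXsubM : ∀ x, x ∈ X → x ∈ M := by
      obtain ⟨hXlamsub, hXcnt, hXinf⟩ := hF X hXF
      obtain ⟨w0, f0, hwf0⟩ := enum_exists hXcnt hXinf.nonempty
      obtain ⟨w', f', hw'M, hf'M, hIE⟩ := witness2 M φenum (fun _ => X) (fun _ => hXM)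
        ⟨w0, f0, (realize_φenum _ _ _).mpr hwf0⟩
      rw [realize_φenum] at hIE
      have hIE' : IsEnum X w' f' := hIE
      have hwM : ∀ u, u ∈ w' → u ∈ M := by
        intro u
        induction u using ZFSet.mem_wf.induction with
        | _ u ihu =>
          intro hu
          rcases hIE'.1 u hu with rfl | ⟨m, ⟨hmw, hmu⟩, rfl⟩
          · exact hemptyM
          · exact hsuccM m (ihu m hmu hmw)
      intro x hx
      obtain ⟨n, hnw, hnx⟩ := hIE'.2.1 x hx
      obtain ⟨y, hyM, hy⟩ := witness1 M φfval ![n, f']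
        (by intro i; fin_cases i; exacts [hwM n hnw, hf'M]) ⟨x, (realize_φfval _ _).mpr hnx⟩
      rw [realize_φfval] at hy
      exact (hIE'.2.2 n y x hy hnx) ▸ hyM
    refine ⟨X, hXF, hXM, ?_, hrkX⟩
    intro x hx
    have hx' : x ∈ X := Iff.rfl.mp hx
    have hxlam : x ∈ lam := Iff.rfl.mp ((hF X hXF).1 hx)
    rw [hXlam]
    exact ⟨hXsubM x hx', hxlam⟩
  -- Step 2: M ∩ ω₁ ⊆ rk Xlam
  have part2 : ∀ a : ZFSet, a ∈ M → a ∈ om1 → a ∈ rk Xlam := by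
    intro a haM haom
    obtain ⟨X, hXF, hXM, hXsub, hXrk⟩ :=
      step1 (insert a a) (hsuccM a haM) (succ_mem_om1 hom1 haom)
    by_cases hEq : X = Xlam
    · rw [hEq] at hXrk
      rw [hXrk]
      exact ZFSet.mem_insert a a
    · have hss : X.toSet ⊂ Xlam.toSet :=
        Set.ssubset_iff_subset_ne.mpr ⟨hXsub, fun h => hEq (SetLike.coe_injective h)⟩
      exact (hrkc Xlam hXlamF a).mpr
        ⟨X, hXF, hss, Or.inl (by rw [hXrk]; exact ZFSet.mem_insert a a)⟩
  refine ⟨?_, part2⟩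
  intro a haM haom
  obtain ⟨Y, hYF, hYss, hYrk⟩ := descent hwf hrkc Xlam hXlamF a (part2 a haM haom)
  exact ⟨Y, hYF, hctrick Y hYF hYss, hYss, hYrk⟩
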